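/- arXiv:1003.4920 — 3 statements merged into one kernel-verified Lean document; each statement's English description precedes it below -/
import Mathlib

section
/- Let (γ_n) be a positive sequence with γ_n → 0 and ∑ γ_n = ∞. Fix n and set s_{n,k} = ∑_{i=0}^{k} γ_{n+i} (with s_{n,-1}=0). Let q, q̄ > 0. Then for every ε > 0 there exists T such that for all t ≥ T, ∑_{k=0}^{t} ∫_{s_{n,k-1}}^{s_{n,k}} e^{q(u - s_{n,t})} (e^{q̄ γ_{n+k}} - 1) du ≤ 2ε/q. -/
open Filter Finset

lemma int_exp_aux (q a b c : ℝ) (hq : 0 < q) :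
    ∫ u in a..b, Real.exp (q * (u - c)) =
      (Real.exp (q * (b - c)) - Real.exp (q * (a - c))) / q := by
  have hder : ∀ u : ℝ, HasDerivAt (fun u => Real.exp (q * (u - c)) / q)
      (Real.exp (q * (u - c))) u := by
    intro u
    have h1 : HasDerivAt (fun u : ℝ => q * (u - c)) q u := by
      simpa using (((hasDerivAt_id u).sub_const c).const_mul q)
    have := (h1.exp).div_const q
    simpa [mul_comm, mul_div_assoc, mul_div_cancel_left₀ _ hq.ne'] using this
  rw [intervalIntegral.integral_eq_sub_of_hasDerivAt (fun u _ => hder u)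
    ((Real.continuous_exp.comp (by continuity)).intervalIntegrable a b)]
  ring

/-- Step 2 of Proposition A.1: the discrete exponential Riemann sum error bound.
Here `S k = s_{n,k-1}` (so `S 0 = 0` and `S (k+1) = s_{n,k} = ∑_{i=0}^k γ_{n+i}`). -/
theorem stmt0 (γ : ℕ → ℝ) (hpos : ∀ k, 0 < γ k)
    (hγ0 : Tendsto γ atTop (nhds 0))
    (hdiv : Tendsto (fun m => ∑ i ∈ Finset.range m, γ i) atTop atTop)
    (n : ℕ) (S : ℕ → ℝ) (hS : ∀ k, S k = ∑ i ∈ Finset.range k, γ (n + i))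
    (q qbar : ℝ) (hq : 0 < q) (hqbar : 0 < qbar) :
    ∀ ε > 0, ∃ T : ℕ, ∀ t ≥ T,
      (∑ k ∈ Finset.range (t + 1),
        ∫ u in (S k)..(S (k + 1)),
          Real.exp (q * (u - S (t + 1))) * (Real.exp (qbar * γ (n + k)) - 1))
      ≤ 2 * ε / q := by
  intro ε hε
  -- monotonicity of S
  have hSstep : ∀ k, S (k + 1) = S k + γ (n + k) := by
    intro k; rw [hS, hS, Finset.sum_range_succ]
  have hSmono : Monotone S := by
    apply monotone_nat_of_le_succ
    intro k; rw [hSstep k]; linarith [hpos (n + k)]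
  -- S tends to infinity
  have hSrep : ∀ k, S k = (∑ i ∈ Finset.range (n + k), γ i) - ∑ i ∈ Finset.range n, γ i := by
    intro k
    rw [hS, Finset.sum_range_add]
    ring
  have hStop : Tendsto S atTop atTop := by
    have h1 : Tendsto (fun k => ∑ i ∈ Finset.range (n + k), γ i) atTop atTop := by
      have := hdiv.comp (tendsto_add_atTop_nat n)
      exact this.congr fun k => by rw [Function.comp_apply, Nat.add_comm]
    have h2 := tendsto_atTop_add_const_right atTop (-(∑ i ∈ Finset.range n, γ i)) h1
    refine h2.congr fun k => ?_
    rw [hSrep k]; ring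
  -- choose K such that the coefficient is small
  have hcoef : Tendsto (fun m => Real.exp (qbar * γ m) - 1) atTop (nhds 0) := by
    have h1 : Tendsto (fun m => qbar * γ m) atTop (nhds 0) := by
      simpa using hγ0.const_mul qbar
    have h2 := (Real.continuous_exp.tendsto 0).comp h1
    simp only [Real.exp_zero] at h2
    simpa using h2.sub_const 1
  obtain ⟨K, hK⟩ := (hcoef.eventually (gt_mem_nhds hε)).exists_forall_of_atTop
  set C : ℝ := ∑ k ∈ Finset.range K,
      (Real.exp (qbar * γ (n + k)) - 1) * (Real.exp (q * S (k + 1)) - Real.exp (q * S k)) with hC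
  -- choose T₀ such that exp(-q S(t+1)) * C ≤ ε
  have hCto0 : Tendsto (fun t : ℕ => Real.exp (-(q * S (t + 1))) * C) atTop (nhds 0) := by
    have h1 : Tendsto (fun t : ℕ => -(q * S (t + 1))) atTop atBot := by
      have := (hStop.comp (tendsto_add_atTop_nat 1)).const_mul_atTop hq
      exact tendsto_neg_atTop_atBot.comp this
    have h2 := Real.tendsto_exp_atBot.comp h1
    simpa using h2.mul_const C
  obtain ⟨T₀, hT₀⟩ := (hCto0.eventually (gt_mem_nhds hε)).exists_forall_of_atTop
  refine ⟨max K T₀, fun t ht => ?_⟩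
  have htK : K ≤ t := le_trans (le_max_left _ _) ht
  have htT₀ : T₀ ≤ t := le_trans (le_max_right _ _) ht
  set c : ℝ := S (t + 1) with hc
  -- rewrite each integral
  have hterm : ∀ k, (∫ u in (S k)..(S (k + 1)),
      Real.exp (q * (u - c)) * (Real.exp (qbar * γ (n + k)) - 1))
      = Real.exp (-(q * c)) / q *
        ((Real.exp (qbar * γ (n + k)) - 1) * (Real.exp (q * S (k + 1)) - Real.exp (q * S k))) := by
    intro k
    rw [intervalIntegral.integral_mul_const, int_exp_aux q _ _ c hq]
    have e1 : Real.exp (q * (S (k + 1) - c)) = Real.exp (q * S (k + 1)) * Real.exp (-(q * c)) := by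
      rw [← Real.exp_add]; ring_nf
    have e2 : Real.exp (q * (S k - c)) = Real.exp (q * S k) * Real.exp (-(q * c)) := by
      rw [← Real.exp_add]; ring_nf
    rw [e1, e2]; ring
  rw [Finset.sum_congr rfl (fun k _ => hterm k), ← Finset.mul_sum]
  set A : ℝ := ∑ k ∈ Finset.range (t + 1),
      (Real.exp (qbar * γ (n + k)) - 1) * (Real.exp (q * S (k + 1)) - Real.exp (q * S k)) with hA
  -- bound A
  have hAbound : A ≤ C + ε * Real.exp (q * c) := by
    have hsplit : A = C + ∑ k ∈ Finset.Ico K (t + 1),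
        (Real.exp (qbar * γ (n + k)) - 1) * (Real.exp (q * S (k + 1)) - Real.exp (q * S k)) := by
      rw [hA, hC]; simp only [Finset.range_eq_Ico]
      exact (Finset.sum_Ico_consecutive _ (Nat.zero_le K) (by omega : K ≤ t + 1)).symm
    rw [hsplit]
    have htail : ∑ k ∈ Finset.Ico K (t + 1),
        (Real.exp (qbar * γ (n + k)) - 1) * (Real.exp (q * S (k + 1)) - Real.exp (q * S k))
        ≤ ∑ k ∈ Finset.Ico K (t + 1),
        ε * (Real.exp (q * S (k + 1)) - Real.exp (q * S k)) := by
      apply Finset.sum_le_sum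
      intro k hk
      have hkK : K ≤ k := (Finset.mem_Ico.mp hk).1
      have h1 : Real.exp (qbar * γ (n + k)) - 1 ≤ ε :=
        le_of_lt (hK (n + k) (le_trans hkK (Nat.le_add_left k n)))
      have h2 : (0:ℝ) ≤ Real.exp (q * S (k + 1)) - Real.exp (q * S k) := by
        have := Real.exp_le_exp.mpr (mul_le_mul_of_nonneg_left
          (hSmono (Nat.le_succ k)) hq.le)
        linarith
      exact mul_le_mul_of_nonneg_right h1 h2
    have htele : ∑ k ∈ Finset.Ico K (t + 1),
        ε * (Real.exp (q * S (k + 1)) - Real.exp (q * S k))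
        = ε * (Real.exp (q * S (t + 1)) - Real.exp (q * S K)) := by
      rw [← Finset.mul_sum]
      congr 1
      rw [Finset.sum_Ico_eq_sub _ (by omega : K ≤ t + 1),
        Finset.sum_range_sub (fun k => Real.exp (q * S k)),
        Finset.sum_range_sub (fun k => Real.exp (q * S k))]
      ring
    have hexpK : (0:ℝ) < Real.exp (q * S K) := Real.exp_pos _
    have : ε * (Real.exp (q * S (t + 1)) - Real.exp (q * S K)) ≤ ε * Real.exp (q * c) := by
      rw [hc]
      nlinarith
    linarith
  -- conclude
  have hApos : (0:ℝ) ≤ Real.exp (-(q * c)) / q := by positivity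
  have h1 : Real.exp (-(q * c)) / q * A ≤ Real.exp (-(q * c)) / q * (C + ε * Real.exp (q * c)) :=
    mul_le_mul_of_nonneg_left hAbound hApos
  have h2 : Real.exp (-(q * c)) / q * (C + ε * Real.exp (q * c))
      = Real.exp (-(q * c)) * C / q + ε / q := by
    have : Real.exp (-(q * c)) * Real.exp (q * c) = 1 := by
      rw [← Real.exp_add]; simp
    field_simp
    nlinarith [this]
  have h3 : Real.exp (-(q * c)) * C / q ≤ ε / q := by
    gcongr
    exact (hT₀ t htT₀).le
  have h4 : 2 * ε / q = ε / q + ε / q := by ring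
  linarith
end

section
/- Let (γ_n) be a positive decreasing sequence with γ_n → 0 and ∑ γ_n = ∞, and set s_{n,k} = ∑_{i=0}^{k} γ_{n+i}. Let q > 0 and let (y_k) be a sequence of nonnegative reals converging to 0. Then ∑_{k=0}^{t} γ_{n+k} e^{q(s_{n,k} - s_{n,t})} y_{n+k} → 0 as t → ∞. -/
open Filter Finset

/-- Step 1 of Proposition A.1 (scalar core): a weighted exponential average of a
vanishing nonnegative sequence vanishes.  Here `s k = s_{n,k} = ∑_{i=0}^k γ_{n+i}`. -/
theorem stmt1 (γ : ℕ → ℝ) (hpos : ∀ k, 0 < γ k) (hdec : ∀ k, γ (k + 1) ≤ γ k)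
    (hγ0 : Tendsto γ atTop (nhds 0))
    (hdiv : Tendsto (fun m => ∑ i ∈ Finset.range m, γ i) atTop atTop)
    (n : ℕ) (s : ℕ → ℝ) (hs : ∀ k, s k = ∑ i ∈ Finset.range (k + 1), γ (n + i))
    (q : ℝ) (hq : 0 < q)
    (y : ℕ → ℝ) (hy : ∀ k, 0 ≤ y k) (hy0 : Tendsto y atTop (nhds 0)) :
    Tendsto (fun t => ∑ k ∈ Finset.range (t + 1),
      γ (n + k) * Real.exp (q * (s k - s t)) * y (n + k)) atTop (nhds 0) := by
  have hanti : Antitone γ := antitone_nat_of_succ_le hdec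
  have hγle : ∀ k, γ k ≤ γ 0 := fun k => hanti (Nat.zero_le k)
  set D : ℝ := Real.exp (q * γ 0) with hD
  set C : ℝ := γ 0 + D / q with hC
  have hDpos : 0 < D := Real.exp_pos _
  have hCpos : 0 < C := add_pos (hpos 0) (div_pos hDpos hq)
  have hCq : C * q = γ 0 * q + D := by rw [hC, add_mul, div_mul_cancel₀ _ hq.ne']
  have hssucc : ∀ k, s (k + 1) = s k + γ (n + (k + 1)) := by
    intro k; rw [hs, hs, Finset.sum_range_succ]
  have hsmono : Monotone s := by
    apply monotone_nat_of_le_succ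
    intro k; rw [hssucc k]; linarith [hpos (n + (k + 1))]
  -- s tends to infinity
  have hstop : Tendsto s atTop atTop := by
    have hseq : ∀ t, s t = (∑ j ∈ Finset.range (n + (t + 1)), γ j)
        - ∑ j ∈ Finset.range n, γ j := by
      intro t
      have h := Finset.sum_range_add γ n (t + 1)
      rw [hs]
      rw [h]
      ring
    have h1 : Tendsto (fun t : ℕ => n + (t + 1)) atTop atTop :=
      tendsto_atTop_mono (fun t => by simp only [id_eq]; omega) tendsto_id
    have h2 : Tendsto (fun t => (∑ j ∈ Finset.range (n + (t + 1)), γ j)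
        - ∑ j ∈ Finset.range n, γ j) atTop atTop :=
      tendsto_atTop_add_const_right _ _ (hdiv.comp h1)
    exact h2.congr (fun t => (hseq t).symm)
  -- uniform bound on the exponential weight sums
  have hA' : ∀ t, ∑ k ∈ Finset.range (t + 1), γ (n + k) * Real.exp (q * s k)
      ≤ C * Real.exp (q * s t) := by
    intro t
    induction t with
    | zero =>
      rw [Finset.sum_range_one]
      have : γ (n + 0) ≤ C := le_trans (hγle _) (by nlinarith)
      nlinarith [Real.exp_pos (q * s 0)]
    | succ t ih =>
      rw [Finset.sum_range_succ]
      set g := γ (n + (t + 1)) with hg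
      have hgpos : 0 < g := hpos _
      have hgle : g ≤ γ 0 := hγle _
      have hst : s (t + 1) = s t + g := hssucc t
      have h1 : q * g + 1 ≤ Real.exp (q * g) := by
        have := Real.add_one_le_exp (q * g); linarith
      have h2 : Real.exp (q * g) ≤ D := by
        rw [hD]; exact Real.exp_le_exp.mpr (by nlinarith)
      have hkey : C + g * Real.exp (q * g) ≤ C * Real.exp (q * g) := by
        nlinarith [mul_le_mul_of_nonneg_left h1 hCpos.le,
          mul_le_mul_of_nonneg_left h2 hgpos.le,
          mul_pos hq hgpos, mul_nonneg (mul_nonneg (hpos 0).le hq.le) hgpos.le]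
      have hEa : (0:ℝ) < Real.exp (q * s t) := Real.exp_pos _
      have hsplit : Real.exp (q * s (t + 1)) = Real.exp (q * s t) * Real.exp (q * g) := by
        rw [hst, ← Real.exp_add]; ring_nf
      rw [hsplit]
      have := mul_le_mul_of_nonneg_right hkey hEa.le
      nlinarith [ih]
  have hA : ∀ t, ∑ k ∈ Finset.range (t + 1), γ (n + k) * Real.exp (q * (s k - s t)) ≤ C := by
    intro t
    have hrw : ∀ k, γ (n + k) * Real.exp (q * (s k - s t))
        = γ (n + k) * Real.exp (q * s k) * Real.exp (-(q * s t)) := by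
      intro k; rw [mul_assoc, ← Real.exp_add, mul_sub, sub_eq_add_neg]
    calc ∑ k ∈ Finset.range (t + 1), γ (n + k) * Real.exp (q * (s k - s t))
        = (∑ k ∈ Finset.range (t + 1), γ (n + k) * Real.exp (q * s k))
            * Real.exp (-(q * s t)) := by
          rw [Finset.sum_mul]; exact Finset.sum_congr rfl (fun k _ => hrw k)
      _ ≤ C * Real.exp (q * s t) * Real.exp (-(q * s t)) :=
          mul_le_mul_of_nonneg_right (hA' t) (Real.exp_pos _).le
      _ = C := by rw [mul_assoc, ← Real.exp_add]; simp
  -- nonnegativity of the summands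
  have hterm_nonneg : ∀ t k, 0 ≤ γ (n + k) * Real.exp (q * (s k - s t)) * y (n + k) :=
    fun t k => mul_nonneg (mul_nonneg (hpos _).le (Real.exp_pos _).le) (hy _)
  -- the main ε-argument
  rw [Metric.tendsto_atTop]
  intro ε hε
  set ε1 : ℝ := ε / (2 * C) with hε1
  have hε1pos : 0 < ε1 := div_pos hε (by positivity)
  -- cutoff where y is small
  obtain ⟨T, hT⟩ := (Metric.tendsto_atTop.mp hy0) ε1 hε1pos
  have hysmall : ∀ m ≥ T, y m ≤ ε1 := by
    intro m hm
    have := hT m hm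
    rw [Real.dist_eq, sub_zero, abs_of_nonneg (hy m)] at this
    linarith
  -- head tends to 0
  set Dh : ℝ := ∑ k ∈ Finset.range T, γ (n + k) * y (n + k) with hDh
  have hDhnn : 0 ≤ Dh :=
    Finset.sum_nonneg fun k _ => mul_nonneg (hpos _).le (hy _)
  have hhead0 : Tendsto (fun t => Dh * Real.exp (q * (s T - s t))) atTop (nhds 0) := by
    have h1 : Tendsto (fun t => q * s t) atTop atTop := hstop.const_mul_atTop hq
    have h2 : Tendsto (fun t => -(q * s t)) atTop atBot :=
      tendsto_neg_atTop_atBot.comp h1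
    have h3 : Tendsto (fun t => q * s T + -(q * s t)) atTop atBot :=
      tendsto_atBot_add_const_left _ _ h2
    have h4 : Tendsto (fun t => Real.exp (q * (s T - s t))) atTop (nhds 0) := by
      have := Real.tendsto_exp_atBot.comp h3
      exact this.congr (fun t => by simp only [Function.comp_apply]; congr 1; ring)
    have := h4.const_mul Dh
    simpa using this
  obtain ⟨T2, hT2⟩ := (Metric.tendsto_atTop.mp hhead0) (ε / 2) (by positivity)
  refine ⟨max T T2, fun t ht => ?_⟩
  have htT : T ≤ t := le_trans (le_max_left _ _) ht
  have htT2 : T2 ≤ t := le_trans (le_max_right _ _) ht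
  have hTt1 : T ≤ t + 1 := by omega
  -- split the sum
  have hsplit : ∑ k ∈ Finset.range (t + 1), γ (n + k) * Real.exp (q * (s k - s t)) * y (n + k)
      = (∑ k ∈ Finset.range T, γ (n + k) * Real.exp (q * (s k - s t)) * y (n + k))
      + ∑ k ∈ Finset.Ico T (t + 1), γ (n + k) * Real.exp (q * (s k - s t)) * y (n + k) := by
    rw [Finset.range_eq_Ico, Finset.range_eq_Ico]
    exact (Finset.sum_Ico_consecutive _ (Nat.zero_le T) hTt1).symm
  -- head bound
  have hhead : (∑ k ∈ Finset.range T, γ (n + k) * Real.exp (q * (s k - s t)) * y (n + k))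
      ≤ Dh * Real.exp (q * (s T - s t)) := by
    rw [hDh, Finset.sum_mul]
    apply Finset.sum_le_sum
    intro k hk
    have hkT : k ≤ T := le_of_lt (Finset.mem_range.mp hk)
    have hsk : s k ≤ s T := hsmono hkT
    have : Real.exp (q * (s k - s t)) ≤ Real.exp (q * (s T - s t)) :=
      Real.exp_le_exp.mpr (by nlinarith)
    calc γ (n + k) * Real.exp (q * (s k - s t)) * y (n + k)
        ≤ γ (n + k) * Real.exp (q * (s T - s t)) * y (n + k) := by
          apply mul_le_mul_of_nonneg_right _ (hy _)
          exact mul_le_mul_of_nonneg_left this (hpos _).le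
      _ = γ (n + k) * y (n + k) * Real.exp (q * (s T - s t)) := by ring
  -- tail bound
  have htail : (∑ k ∈ Finset.Ico T (t + 1), γ (n + k) * Real.exp (q * (s k - s t)) * y (n + k))
      ≤ ε1 * C := by
    calc ∑ k ∈ Finset.Ico T (t + 1), γ (n + k) * Real.exp (q * (s k - s t)) * y (n + k)
        ≤ ∑ k ∈ Finset.Ico T (t + 1), γ (n + k) * Real.exp (q * (s k - s t)) * ε1 := by
          apply Finset.sum_le_sum
          intro k hk
          have hkT : T ≤ k := (Finset.mem_Ico.mp hk).1
          have : y (n + k) ≤ ε1 := hysmall _ (by omega)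
          exact mul_le_mul_of_nonneg_left this
            (mul_nonneg (hpos _).le (Real.exp_pos _).le)
      _ = (∑ k ∈ Finset.Ico T (t + 1), γ (n + k) * Real.exp (q * (s k - s t))) * ε1 := by
          rw [Finset.sum_mul]
      _ ≤ C * ε1 := by
          apply mul_le_mul_of_nonneg_right _ hε1pos.le
          calc ∑ k ∈ Finset.Ico T (t + 1), γ (n + k) * Real.exp (q * (s k - s t))
              ≤ ∑ k ∈ Finset.range (t + 1), γ (n + k) * Real.exp (q * (s k - s t)) := by
                apply Finset.sum_le_sum_of_subset_of_nonneg
                · rw [Finset.range_eq_Ico]; exact Finset.Ico_subset_Ico (Nat.zero_le _) le_rfl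
                · intro k _ _; exact mul_nonneg (hpos _).le (Real.exp_pos _).le
            _ ≤ C := hA t
      _ = ε1 * C := by ring
  have hε1C : ε1 * C = ε / 2 := by
    rw [hε1]; field_simp
  -- head is small for t ≥ T2
  have hheadsmall : Dh * Real.exp (q * (s T - s t)) < ε / 2 := by
    have := hT2 t htT2
    rw [Real.dist_eq, sub_zero] at this
    calc Dh * Real.exp (q * (s T - s t))
        ≤ |Dh * Real.exp (q * (s T - s t))| := le_abs_self _
      _ < ε / 2 := this
  rw [Real.dist_eq, sub_zero, abs_of_nonneg
    (Finset.sum_nonneg fun k _ => hterm_nonneg t k), hsplit]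
  have hfinal := add_lt_add_of_le_of_lt htail hheadsmall
  linarith [hfinal]
end

section
/- Let Q be a positive definite symmetric d×d matrix, Σ a symmetric positive semidefinite d×d matrix, and (γ_n) a positive sequence decreasing to 0 with ∑ γ_n = ∞. For fixed n set s_{n,k} = ∑_{i=0}^{k} γ_{n+i}. Then the series V_n = ∑_{k=0}^{∞} γ_{n+k} e^{-Q s_{n,k}} Σ e^{-Q s_{n,k}} converges, and V_n → ∫_0^∞ e^{-Qt} Σ e^{-Qt} dt as n → ∞. -/
open MeasureTheory Matrix Filter Finset

attribute [local instance] Matrix.normedAddCommGroup Matrix.normedSpace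


private lemma expIntOn {m : ℝ} (hm : 0 < m) :
    MeasureTheory.IntegrableOn (fun t : ℝ => Real.exp (-(t * m))) (Set.Ioi 0) := by
  simpa [mul_comm] using exp_neg_integrableOn_Ioi 0 hm

private lemma integral_exp_neg_mul {m : ℝ} (hm : 0 < m) :
    ∫ t in Set.Ioi (0:ℝ), Real.exp (-(t * m)) = 1 / m := by
  have hd : ∀ x ∈ Set.Ici (0:ℝ),
      HasDerivAt (fun t : ℝ => -Real.exp (-(t * m)) / m) (Real.exp (-(x * m))) x := by
    intro x _
    have h1 : HasDerivAt (fun t : ℝ => -(t * m)) (-m) x := by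
      simpa using ((hasDerivAt_id x).mul_const m).fun_neg
    have h2 := (Real.hasDerivAt_exp (-(x * m))).comp x h1
    have h3 := h2.fun_neg.div_const m
    refine h3.congr_deriv ?_
    field_simp
  have hT : Tendsto (fun t : ℝ => t * m) atTop atTop :=
    Tendsto.atTop_mul_const hm tendsto_id
  have hb : Tendsto (fun t : ℝ => Real.exp (-(t * m))) atTop (nhds 0) :=
    Real.tendsto_exp_atBot.comp (tendsto_neg_atBot_iff.mpr hT)
  have hlim : Tendsto (fun t : ℝ => -Real.exp (-(t * m)) / m) atTop (nhds 0) := by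
    have := (hb.neg).div_const m
    simpa using this
  have := MeasureTheory.integral_Ioi_of_hasDerivAt_of_tendsto' hd (expIntOn hm) hlim
  rw [this]
  simp
  ring


private lemma key1aux {E x : ℝ} (hE : 0 < E) (hx : 0 ≤ x) :
    x * E ≤ E * Real.exp x - E := by
  nlinarith [Real.add_one_le_exp x]

private lemma key2aux {E c x : ℝ} (hE : 0 < E) (hc : 0 < c) (hx : 0 ≤ x)
    (h2 : c * Real.exp x ≤ 1) : c * (E * Real.exp x - E) ≤ E * x := by
  have h1 : Real.exp x - 1 ≤ x * Real.exp x := by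
    have h := Real.add_one_le_exp (-x)
    have h2' : (1 - x) * Real.exp x ≤ Real.exp (-x) * Real.exp x :=
      mul_le_mul_of_nonneg_right (by linarith) (Real.exp_pos x).le
    rw [← Real.exp_add] at h2'
    simp only [neg_add_cancel, Real.exp_zero] at h2'
    nlinarith
  calc c * (E * Real.exp x - E) = (E * (Real.exp x - 1)) * c := by ring
    _ ≤ (E * (x * Real.exp x)) * c :=
        mul_le_mul_of_nonneg_right (mul_le_mul_of_nonneg_left h1 hE.le) hc.le
    _ = (E * x) * (c * Real.exp x) := by ring
    _ ≤ (E * x) * 1 := mul_le_mul_of_nonneg_left h2 (by positivity)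
    _ = E * x := by ring

private lemma c_exp_le_one {m gn gk : ℝ} (hm : 0 < m) (hg : gk ≤ gn) (hgk : 0 ≤ gk) :
    Real.exp (-(gn * m)) * Real.exp (gk * m) ≤ 1 := by
  rw [← Real.exp_add]
  apply Real.exp_le_one_iff.mpr
  nlinarith

private lemma series_facts {m : ℝ} (hm : 0 < m) (g T : ℕ → ℝ) (gn : ℝ)
    (hg : ∀ k, 0 < g k) (hgle : ∀ k, g k ≤ gn)
    (hT0 : T 0 = 0) (hTsucc : ∀ k, T (k + 1) = T k + g k)
    (hTtop : Tendsto T atTop atTop) :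
    Summable (fun k : ℕ => g k * Real.exp (-(T (k + 1) * m)))
    ∧ (∑' k : ℕ, g k * Real.exp (-(T (k + 1) * m))) ≤ 1 / m
    ∧ Real.exp (-(gn * m)) / m ≤ ∑' k : ℕ, g k * Real.exp (-(T (k + 1) * m)) := by
  have ha0 : ∀ k, 0 ≤ g k * Real.exp (-(T (k + 1) * m)) :=
    fun k => mul_nonneg (hg _).le (Real.exp_pos _).le
  have hb0 : Real.exp (-(T 0 * m)) = 1 := by rw [hT0]; simp
  have hbk : ∀ k, Real.exp (-(T k * m))
      = Real.exp (-(T (k + 1) * m)) * Real.exp (g k * m) := by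
    intro k; rw [← Real.exp_add]; congr 1; rw [hTsucc]; ring
  have key1 : ∀ k, m * (g k * Real.exp (-(T (k + 1) * m)))
      ≤ Real.exp (-(T k * m)) - Real.exp (-(T (k + 1) * m)) := by
    intro k
    have := key1aux (Real.exp_pos (-(T (k + 1) * m))) (mul_pos (hg k) hm).le
    rw [hbk k]
    nlinarith [this]
  have key2 : ∀ k, Real.exp (-(gn * m))
        * (Real.exp (-(T k * m)) - Real.exp (-(T (k + 1) * m)))
      ≤ m * (g k * Real.exp (-(T (k + 1) * m))) := by
    intro k
    have := key2aux (Real.exp_pos (-(T (k + 1) * m))) (Real.exp_pos (-(gn * m)))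
      (mul_pos (hg k) hm).le (c_exp_le_one hm (hgle k) (hg k).le)
    rw [hbk k]
    nlinarith [this]
  have hpart : ∀ N, ∑ k ∈ Finset.range N, g k * Real.exp (-(T (k + 1) * m)) ≤ 1 / m := by
    intro N
    have h1 : m * ∑ k ∈ Finset.range N, g k * Real.exp (-(T (k + 1) * m))
        ≤ Real.exp (-(T 0 * m)) - Real.exp (-(T N * m)) := by
      rw [Finset.mul_sum, ← Finset.sum_range_sub' (fun k => Real.exp (-(T k * m))) N]
      exact Finset.sum_le_sum fun k _ => key1 k
    rw [le_div_iff₀ hm]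
    have h2 := Real.exp_pos (-(T N * m))
    rw [hb0] at h1
    linarith
  have hsum : Summable (fun k : ℕ => g k * Real.exp (-(T (k + 1) * m))) :=
    summable_of_sum_range_le ha0 hpart
  refine ⟨hsum, Real.tsum_le_of_sum_range_le ha0 hpart, ?_⟩
  have hbtend : Tendsto (fun k => Real.exp (-(T k * m))) atTop (nhds 0) := by
    apply Real.tendsto_exp_atBot.comp
    exact tendsto_neg_atBot_iff.mpr (hTtop.atTop_mul_const hm)
  have hPS := hsum.hasSum.tendsto_sum_nat
  have hlhs : Tendsto (fun N => (Real.exp (-(gn * m)) / m)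
      * (Real.exp (-(T 0 * m)) - Real.exp (-(T N * m)))) atTop
      (nhds (Real.exp (-(gn * m)) / m)) := by
    have h1 : Tendsto (fun _ : ℕ => Real.exp (-(T 0 * m))) atTop
        (nhds (Real.exp (-(T 0 * m)))) := tendsto_const_nhds
    have h1 := h1.sub hbtend
    have h2 := h1.const_mul (Real.exp (-(gn * m)) / m)
    simpa [hb0] using h2
  refine le_of_tendsto_of_tendsto' hlhs hPS ?_
  intro N
  have hsumineq : Real.exp (-(gn * m)) * (Real.exp (-(T 0 * m)) - Real.exp (-(T N * m)))
      ≤ m * ∑ k ∈ Finset.range N, g k * Real.exp (-(T (k + 1) * m)) := by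
    rw [Finset.mul_sum, ← Finset.sum_range_sub' (fun k => Real.exp (-(T k * m))) N,
      Finset.mul_sum]
    exact Finset.sum_le_sum fun k _ => key2 k
  rw [div_mul_eq_mul_div, div_le_iff₀ hm]
  linarith

private lemma scalar_facts (γ : ℕ → ℝ) (hpos : ∀ k, 0 < γ k) (hdec : ∀ k, γ (k + 1) ≤ γ k)
    (hdiv : Tendsto (fun m => ∑ i ∈ Finset.range m, γ i) atTop atTop)
    {m : ℝ} (hm : 0 < m) (n : ℕ) :
    Summable (fun k : ℕ => γ (n + k) * Real.exp (-((∑ i ∈ Finset.range (k + 1), γ (n + i)) * m)))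
    ∧ (∑' k : ℕ, γ (n + k) * Real.exp (-((∑ i ∈ Finset.range (k + 1), γ (n + i)) * m))) ≤ 1 / m
    ∧ Real.exp (-(γ n * m)) / m
        ≤ ∑' k : ℕ, γ (n + k) * Real.exp (-((∑ i ∈ Finset.range (k + 1), γ (n + i)) * m)) := by
  have hanti : Antitone γ := antitone_nat_of_succ_le hdec
  have hTtop : Tendsto (fun N => ∑ i ∈ Finset.range N, γ (n + i)) atTop atTop := by
    have heq : (fun N => ∑ i ∈ Finset.range N, γ (n + i))
        = fun N => (∑ i ∈ Finset.range (n + N), γ i) - ∑ i ∈ Finset.range n, γ i := by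
      funext N
      rw [Finset.sum_range_add]
      ring
    rw [heq]
    have hcomp : Tendsto (fun N => ∑ i ∈ Finset.range (n + N), γ i) atTop atTop := by
      apply hdiv.comp
      simpa [add_comm] using tendsto_add_atTop_nat n
    simpa [sub_eq_add_neg] using
      tendsto_atTop_add_const_right atTop (-(∑ i ∈ Finset.range n, γ i)) hcomp
  exact series_facts hm (fun k => γ (n + k)) (fun N => ∑ i ∈ Finset.range N, γ (n + i)) (γ n)
    (fun k => hpos (n + k)) (fun k => hanti (Nat.le_add_right n k))
    (by simp) (fun k => Finset.sum_range_succ _ _) hTtop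

private lemma scalar_tendsto (γ : ℕ → ℝ) (hpos : ∀ k, 0 < γ k) (hdec : ∀ k, γ (k + 1) ≤ γ k)
    (hγ0 : Tendsto γ atTop (nhds 0))
    (hdiv : Tendsto (fun m => ∑ i ∈ Finset.range m, γ i) atTop atTop)
    {m : ℝ} (hm : 0 < m) :
    Tendsto (fun n => ∑' k : ℕ,
        γ (n + k) * Real.exp (-((∑ i ∈ Finset.range (k + 1), γ (n + i)) * m)))
      atTop (nhds (1 / m)) := by
  have hL : Tendsto (fun n => Real.exp (-(γ n * m)) / m) atTop (nhds (1 / m)) := by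
    have h1 : Tendsto (fun n => -(γ n * m)) atTop (nhds 0) := by
      simpa using (hγ0.mul_const m).neg
    have h2 := ((Real.continuous_exp.tendsto 0).comp h1).div_const m
    simpa using h2
  exact tendsto_of_tendsto_of_tendsto_of_le_of_le hL tendsto_const_nhds
    (fun n => (scalar_facts γ hpos hdec hdiv hm n).2.2)
    (fun n => (scalar_facts γ hpos hdec hdiv hm n).2.1)

/-- Lemma 3.3's limiting covariance: the series `V_n = ∑_k γ_{n+k} e^{-Q s_{n,k}} Σ e^{-Q s_{n,k}}`
converges and tends, as `n → ∞`, to `∫_0^∞ e^{-Qt} Σ e^{-Qt} dt`. -/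
theorem stmt9 (d : ℕ) (Q S : Matrix (Fin d) (Fin d) ℝ)
    (hQ : Q.PosDef) (hQs : Q.IsSymm) (hS : S.PosSemidef) (hSs : S.IsSymm)
    (γ : ℕ → ℝ) (hpos : ∀ k, 0 < γ k) (hdec : ∀ k, γ (k + 1) ≤ γ k)
    (hγ0 : Tendsto γ atTop (nhds 0))
    (hdiv : Tendsto (fun m => ∑ i ∈ Finset.range m, γ i) atTop atTop)
    (s : ℕ → ℕ → ℝ) (hs : ∀ n k, s n k = ∑ i ∈ Finset.range (k + 1), γ (n + i)) :
    (∀ n : ℕ, Summable fun k : ℕ =>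
      γ (n + k) • (NormedSpace.exp (-(s n k • Q)) * S * NormedSpace.exp (-(s n k • Q)))) ∧
    Tendsto (fun n : ℕ => ∑' k : ℕ,
        γ (n + k) • (NormedSpace.exp (-(s n k • Q)) * S * NormedSpace.exp (-(s n k • Q))))
      atTop
      (nhds (∫ t in Set.Ioi (0 : ℝ),
        NormedSpace.exp (-(t • Q)) * S * NormedSpace.exp (-(t • Q)))) := by
  classical
  have hH : Q.IsHermitian := hQ.1
  set lam : Fin d → ℝ := hH.eigenvalues with hlamdef
  have hlam : ∀ i, 0 < lam i := hQ.eigenvalues_pos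
  have hmp : ∀ p : Fin d × Fin d, 0 < lam p.1 + lam p.2 :=
    fun p => add_pos (hlam p.1) (hlam p.2)
  set u : (Matrix (Fin d) (Fin d) ℝ)ˣ := Unitary.toUnits hH.eigenvectorUnitary with hudef
  set U : Matrix (Fin d) (Fin d) ℝ := (u : Matrix (Fin d) (Fin d) ℝ) with hUdef
  set V : Matrix (Fin d) (Fin d) ℝ :=
    ((u⁻¹ : (Matrix (Fin d) (Fin d) ℝ)ˣ) : Matrix (Fin d) (Fin d) ℝ) with hVdef
  have hspec : Q = U * Matrix.diagonal lam * V := by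
    have h := hH.spectral_theorem
    have e1 : U = (hH.eigenvectorUnitary : Matrix (Fin d) (Fin d) ℝ) := rfl
    have e2 : V = star (hH.eigenvectorUnitary : Matrix (Fin d) (Fin d) ℝ) := rfl
    rw [e1, e2]
    simpa [RCLike.ofReal_real_eq_id] using h
  have hexp : ∀ t : ℝ, NormedSpace.exp (-(t • Q))
      = U * Matrix.diagonal (fun i => Real.exp (-(t * lam i))) * V := by
    intro t
    have h1 : -(t • Q) = U * Matrix.diagonal (fun i => -(t * lam i)) * V := by
      rw [hspec]
      have hd : Matrix.diagonal (fun i => -(t * lam i))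
          = -(t • Matrix.diagonal lam) := by
        rw [← Matrix.diagonal_smul, ← Matrix.diagonal_neg]
        rfl
      rw [hd]
      simp [Matrix.mul_smul, Matrix.smul_mul, mul_neg, neg_mul]
    rw [h1, hUdef, hVdef, Matrix.exp_units_conj u, Matrix.exp_diagonal]
    congr 2
    funext i
    rw [Pi.exp_def, ← Real.exp_eq_exp_ℝ]
  set B : Matrix (Fin d) (Fin d) ℝ := V * S * U with hBdef
  set C : Fin d × Fin d → Matrix (Fin d) (Fin d) ℝ :=
    fun p => B p.1 p.2 • (U * Matrix.single p.1 p.2 1 * V) with hCdef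
  have master : ∀ t : ℝ,
      NormedSpace.exp (-(t • Q)) * S * NormedSpace.exp (-(t • Q))
      = ∑ p : Fin d × Fin d, Real.exp (-(t * (lam p.1 + lam p.2))) • C p := by
    intro t
    have hDBD : Matrix.diagonal (fun i => Real.exp (-(t * lam i))) * B *
        Matrix.diagonal (fun i => Real.exp (-(t * lam i)))
        = ∑ p : Fin d × Fin d, Real.exp (-(t * (lam p.1 + lam p.2))) •
            (B p.1 p.2 • Matrix.single p.1 p.2 1) := by
      ext a b
      have hrhs : (∑ p : Fin d × Fin d, Real.exp (-(t * (lam p.1 + lam p.2))) •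
            (B p.1 p.2 • Matrix.single p.1 p.2 1)) a b
          = Real.exp (-(t * (lam a + lam b))) * B a b := by
        rw [Matrix.sum_apply]
        rw [Fintype.sum_prod_type]
        simp only [Matrix.smul_apply, smul_eq_mul, Matrix.single, Matrix.of_apply,
          mul_ite, mul_one, mul_zero]
        rw [Finset.sum_eq_single a]
        · rw [Finset.sum_eq_single b]
          · simp
          · intro j _ hj; simp [hj]
          · intro h; exact absurd (Finset.mem_univ b) h
        · intro i _ hi
          apply Finset.sum_eq_zero
          intro j _
          simp [hi]
        · intro h; exact absurd (Finset.mem_univ a) h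
      rw [hrhs, Matrix.mul_diagonal, Matrix.diagonal_mul]
      rw [show -(t * (lam a + lam b)) = -(t * lam a) + -(t * lam b) by ring, Real.exp_add]
      ring
    calc NormedSpace.exp (-(t • Q)) * S * NormedSpace.exp (-(t • Q))
        = U * (Matrix.diagonal (fun i => Real.exp (-(t * lam i))) * B *
            Matrix.diagonal (fun i => Real.exp (-(t * lam i)))) * V := by
          rw [hexp t, hBdef]
          simp only [Matrix.mul_assoc]
      _ = ∑ p : Fin d × Fin d, Real.exp (-(t * (lam p.1 + lam p.2))) • C p := by
          have hterm : ∀ (c : ℝ) (M : Matrix (Fin d) (Fin d) ℝ),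
              U * (c • M) * V = c • (U * M * V) := by
            intro c M
            simp [mul_smul_comm, smul_mul_assoc]
          rw [hDBD, Finset.mul_sum, Finset.sum_mul]
          refine Finset.sum_congr rfl fun p _ => ?_
          rw [smul_smul, hterm]
          simp only [hCdef]
          rw [smul_smul]
  have hform : ∀ n, (fun k : ℕ => γ (n + k) •
        (NormedSpace.exp (-(s n k • Q)) * S * NormedSpace.exp (-(s n k • Q))))
      = fun k : ℕ => ∑ p : Fin d × Fin d,
          (γ (n + k) * Real.exp (-((∑ i ∈ Finset.range (k + 1), γ (n + i))
            * (lam p.1 + lam p.2)))) • C p := by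
    intro n
    funext k
    rw [master (s n k), Finset.smul_sum]
    simp only [smul_smul, hs n k]
  have hsummable : ∀ (n : ℕ) (p : Fin d × Fin d),
      Summable (fun k : ℕ => (γ (n + k) * Real.exp (-((∑ i ∈ Finset.range (k + 1), γ (n + i))
        * (lam p.1 + lam p.2)))) • C p) := by
    intro n p
    exact ((scalar_facts γ hpos hdec hdiv (hmp p) n).1).smul_const (C p)
  constructor
  · intro n
    rw [hform n]
    exact summable_sum fun p _ => hsummable n p
  · have hVeq : ∀ n : ℕ, (∑' k : ℕ, γ (n + k) •
          (NormedSpace.exp (-(s n k • Q)) * S * NormedSpace.exp (-(s n k • Q))))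
        = ∑ p : Fin d × Fin d, (∑' k : ℕ, γ (n + k) *
            Real.exp (-((∑ i ∈ Finset.range (k + 1), γ (n + i))
              * (lam p.1 + lam p.2)))) • C p := by
      intro n
      rw [show (fun k : ℕ => γ (n + k) •
          (NormedSpace.exp (-(s n k • Q)) * S * NormedSpace.exp (-(s n k • Q))))
        = _ from hform n]
      rw [Summable.tsum_finsetSum fun p _ => hsummable n p]
      exact Finset.sum_congr rfl fun p _ =>
        Summable.tsum_smul_const ((scalar_facts γ hpos hdec hdiv (hmp p) n).1) (C p)
    have hIeq : (∫ t in Set.Ioi (0 : ℝ),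
          NormedSpace.exp (-(t • Q)) * S * NormedSpace.exp (-(t • Q)))
        = ∑ p : Fin d × Fin d, (1 / (lam p.1 + lam p.2)) • C p := by
      simp only [master]
      rw [MeasureTheory.integral_finset_sum _
        (fun p _ => (expIntOn (hmp p)).smul_const (C p))]
      refine Finset.sum_congr rfl fun p _ => ?_
      rw [integral_smul_const, integral_exp_neg_mul (hmp p)]
    simp only [hVeq, hIeq]
    exact tendsto_finset_sum _ fun p _ =>
      (scalar_tendsto γ hpos hdec hγ0 hdiv (hmp p)).smul_const (C p)
end
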